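/- arXiv:2410.07214 — 4 statements merged into one kernel-verified Lean document; each statement's English description precedes it below -/
import Mathlib

section
/- Let 1 ≤ n < l, let a₁,…,aₘ and b₁,…,b_l be positive real numbers, and for each j ∈ {1,…,l} let β⁽ʲ⁾ ∈ ℝ^l and α⁽ʲ⁾ ∈ ℝ^m be exponent vectors; set Π_j = ∏_{i=1}^{l} b_i^{β_i⁽ʲ⁾} · ∏_{k=1}^{m} a_k^{α_k⁽ʲ⁾}. Let ξ_k⁽ʲ⁾ ∈ ℝ for j ∈ {1,…,n}, k ∈ {n+1,…,l}, and define Π'_j = Π_j · ∏_{k=n+1}^{l} Π_k^{ξ_k⁽ʲ⁾}. Suppose real numbers μ_k⁽ⁱ⁾ (1 ≤ i ≤ n, n+1 ≤ k ≤ l) satisfy, for every j ∈ {1,…,n} and every k ∈ {n+1,…,l}: Σ_{i=1}^{n} (β_i⁽ʲ⁾ + Σ_{p=n+1}^{l} ξ_p⁽ʲ⁾ β_i⁽ᵖ⁾) μ_k⁽ⁱ⁾ = -(β_k⁽ʲ⁾ + Σ_{p=n+1}^{l} ξ_p⁽ʲ⁾ β_k⁽ᵖ⁾). Then for all positive real numbers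 B_{n+1},…,B_l, setting a_k* = a_k for all k, b_i* = (∏_{k=n+1}^{l} B_k^{μ_k⁽ⁱ⁾}) b_i for i ∈ {1,…,n}, and b_k* = B_k b_k for k ∈ {n+1,…,l}, the transformed quantities Π_j* and Π'_j* (defined by the same formulas from the starred parameters) satisfy Π'_j* = Π'_j for every j ∈ {1,…,n}. -/
/-- Invariance of the renormalized dimensionless quantities
`Π'_j = Π_j · Π_{k=n+1}^{l} Π_k^{ξ_k⁽ʲ⁾}` (for `j ∈ {1,…,n}`) under the
renormalization group of incomplete similarity in the MDDP construction.
Indices `i` with `(i : ℕ) < n` correspond to `b_1,…,b_n` and indices with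
`n ≤ (i : ℕ)` to `b_{n+1},…,b_l`.  Here `β j i = β_i⁽ʲ⁾`, `α j k = α_k⁽ʲ⁾`,
`ξ j k = ξ_k⁽ʲ⁾`, and `μ k i = μ_k⁽ⁱ⁾`.  If the `μ_k⁽ⁱ⁾` solve the linear
systems of Claim II, then the transformation `a_k* = a_k`,
`b_i* = (Π_{k ≥ n} B_k^{μ_k⁽ⁱ⁾}) b_i` for `i < n`, `b_k* = B_k b_k` for
`k ≥ n`, leaves every `Π'_j` with `j < n` unchanged. -/
theorem stmt_5 (m n l : ℕ) (hn : 1 ≤ n) (hnl : n < l)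
    (a : Fin m → ℝ) (b : Fin l → ℝ)
    (ha : ∀ k, 0 < a k) (hb : ∀ i, 0 < b i)
    (β : Fin l → Fin l → ℝ) (α : Fin l → Fin m → ℝ)
    (ξ : Fin l → Fin l → ℝ) (μ : Fin l → Fin l → ℝ)
    (hμ : ∀ j : Fin l, (j : ℕ) < n → ∀ k : Fin l, n ≤ (k : ℕ) →
      ∑ i ∈ Finset.univ.filter (fun i : Fin l => (i : ℕ) < n),
          (β j i + ∑ p ∈ Finset.univ.filter (fun p : Fin l => n ≤ (p : ℕ)),
            ξ j p * β p i) * μ k i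
        = -(β j k + ∑ p ∈ Finset.univ.filter (fun p : Fin l => n ≤ (p : ℕ)),
            ξ j p * β p k))
    (B : Fin l → ℝ) (hB : ∀ k, 0 < B k) :
    ∀ j : Fin l, (j : ℕ) < n →
      (fun bb : Fin l → ℝ =>
          ((∏ i, bb i ^ β j i) * ∏ k, a k ^ α j k) *
            ∏ k ∈ Finset.univ.filter (fun k : Fin l => n ≤ (k : ℕ)),
              ((∏ i, bb i ^ β k i) * ∏ q, a q ^ α k q) ^ ξ j k)
        (fun i : Fin l =>
          if (i : ℕ) < n then
            (∏ k ∈ Finset.univ.filter (fun k : Fin l => n ≤ (k : ℕ)),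
              B k ^ μ k i) * b i
          else B i * b i)
      =
      (fun bb : Fin l → ℝ =>
          ((∏ i, bb i ^ β j i) * ∏ k, a k ^ α j k) *
            ∏ k ∈ Finset.univ.filter (fun k : Fin l => n ≤ (k : ℕ)),
              ((∏ i, bb i ^ β k i) * ∏ q, a q ^ α k q) ^ ξ j k) b := by
  intro j hj
  set S : Finset (Fin l) := Finset.univ.filter (fun k : Fin l => n ≤ (k : ℕ)) with hS
  set c : Fin l → ℝ := fun i =>
    if (i : ℕ) < n then ∏ k ∈ S, B k ^ μ k i else B i with hc
  have hcpos : ∀ i, 0 < c i := by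
    intro i
    simp only [hc]
    split
    · exact Finset.prod_pos fun k _ => Real.rpow_pos_of_pos (hB k) _
    · exact hB i
  have hbbeq : (fun i : Fin l =>
      if (i : ℕ) < n then (∏ k ∈ S, B k ^ μ k i) * b i else B i * b i)
      = fun i => c i * b i := by
    funext i
    simp only [hc]
    split <;> rfl
  rw [hbbeq]
  beta_reduce
  set bb : Fin l → ℝ := fun i => c i * b i with hbbdef
  have hbbpos : ∀ i, 0 < bb i := fun i => mul_pos (hcpos i) (hb i)
  -- positivity of the basic monomials
  have hPpos : ∀ (f : Fin l → ℝ), (∀ i, 0 < f i) → ∀ j' : Fin l,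
      (0:ℝ) < (∏ i, f i ^ β j' i) * ∏ k, a k ^ α j' k := by
    intro f hf j'
    exact mul_pos (Finset.prod_pos fun i _ => Real.rpow_pos_of_pos (hf i) _)
      (Finset.prod_pos fun k _ => Real.rpow_pos_of_pos (ha k) _)
  have hGpos : ∀ (f : Fin l → ℝ), (∀ i, 0 < f i) →
      (0:ℝ) < ((∏ i, f i ^ β j i) * ∏ k, a k ^ α j k) *
        ∏ k ∈ S, ((∏ i, f i ^ β k i) * ∏ q, a q ^ α k q) ^ ξ j k := by
    intro f hf
    exact mul_pos (hPpos f hf j)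
      (Finset.prod_pos fun k _ => Real.rpow_pos_of_pos (hPpos f hf k) _)
  -- log of the basic monomials
  have hlogP : ∀ (f : Fin l → ℝ), (∀ i, 0 < f i) → ∀ j' : Fin l,
      Real.log ((∏ i, f i ^ β j' i) * ∏ k, a k ^ α j' k)
        = (∑ i, β j' i * Real.log (f i)) + ∑ k, α j' k * Real.log (a k) := by
    intro f hf j'
    rw [Real.log_mul (ne_of_gt (Finset.prod_pos fun i _ => Real.rpow_pos_of_pos (hf i) _))
        (ne_of_gt (Finset.prod_pos fun k _ => Real.rpow_pos_of_pos (ha k) _)),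
      Real.log_prod (fun i _ => ne_of_gt (Real.rpow_pos_of_pos (hf i) _)),
      Real.log_prod (fun k _ => ne_of_gt (Real.rpow_pos_of_pos (ha k) _))]
    congr 1
    · exact Finset.sum_congr rfl fun i _ => Real.log_rpow (hf i) _
    · exact Finset.sum_congr rfl fun k _ => Real.log_rpow (ha k) _
  -- log of the full renormalized quantity
  have hlogG : ∀ (f : Fin l → ℝ), (∀ i, 0 < f i) →
      Real.log (((∏ i, f i ^ β j i) * ∏ k, a k ^ α j k) *
        ∏ k ∈ S, ((∏ i, f i ^ β k i) * ∏ q, a q ^ α k q) ^ ξ j k)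
      = ((∑ i, β j i * Real.log (f i)) + ∑ k, α j k * Real.log (a k)) +
        ∑ k ∈ S, ξ j k * ((∑ i, β k i * Real.log (f i)) + ∑ q, α k q * Real.log (a q)) := by
    intro f hf
    rw [Real.log_mul (ne_of_gt (hPpos f hf j))
        (ne_of_gt (Finset.prod_pos fun k _ => Real.rpow_pos_of_pos (hPpos f hf k) _)),
      Real.log_prod (fun k _ => ne_of_gt (Real.rpow_pos_of_pos (hPpos f hf k) _)),
      hlogP f hf j]
    congr 1
    exact Finset.sum_congr rfl fun k _ => by
      rw [Real.log_rpow (hPpos f hf k), hlogP f hf k]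
  -- key cancellation identity
  have hlogc : ∀ i : Fin l, (i : ℕ) < n →
      Real.log (c i) = ∑ k ∈ S, μ k i * Real.log (B k) := by
    intro i hi
    simp only [hc, if_pos hi]
    rw [Real.log_prod (fun k _ => ne_of_gt (Real.rpow_pos_of_pos (hB k) _))]
    exact Finset.sum_congr rfl fun k _ => Real.log_rpow (hB k) _
  have hkey2 : (∑ i, β j i * Real.log (c i))
      + ∑ k ∈ S, ξ j k * ∑ i, β k i * Real.log (c i) = 0 := by
    have hswap : ∑ k ∈ S, ξ j k * ∑ i, β k i * Real.log (c i)
        = ∑ i, (∑ k ∈ S, ξ j k * β k i) * Real.log (c i) := by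
      simp only [Finset.mul_sum]
      rw [Finset.sum_comm]
      exact Finset.sum_congr rfl fun i _ => by
        rw [Finset.sum_mul]
        exact Finset.sum_congr rfl fun k _ => by ring
    have hcomb : (∑ i, β j i * Real.log (c i))
        + ∑ i, (∑ k ∈ S, ξ j k * β k i) * Real.log (c i)
        = ∑ i, (β j i + ∑ k ∈ S, ξ j k * β k i) * Real.log (c i) := by
      rw [← Finset.sum_add_distrib]
      exact Finset.sum_congr rfl fun i _ => by ring
    rw [hswap, hcomb,
      ← Finset.sum_filter_add_sum_filter_not Finset.univ (fun i : Fin l => (i : ℕ) < n)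
        (fun i => (β j i + ∑ k ∈ S, ξ j k * β k i) * Real.log (c i))]
    have h1 : ∑ i ∈ Finset.univ.filter (fun i : Fin l => (i : ℕ) < n),
        (β j i + ∑ k ∈ S, ξ j k * β k i) * Real.log (c i)
        = ∑ k ∈ S, -((β j k + ∑ p ∈ S, ξ j p * β p k) * Real.log (B k)) := by
      have step1 : ∑ i ∈ Finset.univ.filter (fun i : Fin l => (i : ℕ) < n),
          (β j i + ∑ k ∈ S, ξ j k * β k i) * Real.log (c i)
          = ∑ i ∈ Finset.univ.filter (fun i : Fin l => (i : ℕ) < n),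
            ∑ k ∈ S, (β j i + ∑ p ∈ S, ξ j p * β p i) * μ k i * Real.log (B k) := by
        refine Finset.sum_congr rfl fun i hi => ?_
        rw [hlogc i (Finset.mem_filter.mp hi).2, Finset.mul_sum]
        exact Finset.sum_congr rfl fun k _ => by ring
      rw [step1, Finset.sum_comm]
      refine Finset.sum_congr rfl fun k hk => ?_
      rw [← Finset.sum_mul, hμ j hj k (Finset.mem_filter.mp hk).2]
      ring
    have h2 : ∑ i ∈ Finset.univ.filter (fun i : Fin l => ¬ (i : ℕ) < n),
        (β j i + ∑ k ∈ S, ξ j k * β k i) * Real.log (c i)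
        = ∑ k ∈ S, (β j k + ∑ p ∈ S, ξ j p * β p k) * Real.log (B k) := by
      have hSnot : Finset.univ.filter (fun i : Fin l => ¬ (i : ℕ) < n) = S := by
        simp [hS, not_lt]
      rw [hSnot]
      refine Finset.sum_congr rfl fun k hk => ?_
      have hkn : n ≤ (k : ℕ) := by
        have := Finset.mem_filter.mp hk
        simpa [hS] using this.2
      simp only [hc, if_neg (not_lt.mpr hkn)]
    rw [h1, h2, ← Finset.sum_add_distrib]
    exact Finset.sum_eq_zero fun k _ => by ring
  -- split the log over the decomposition bb i = c i * b i
  have hsplit : ∀ j' : Fin l,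
      (∑ i, β j' i * Real.log (bb i))
        = (∑ i, β j' i * Real.log (c i)) + ∑ i, β j' i * Real.log (b i) := by
    intro j'
    rw [← Finset.sum_add_distrib]
    refine Finset.sum_congr rfl fun i _ => ?_
    rw [hbbdef]
    simp only
    rw [Real.log_mul (ne_of_gt (hcpos i)) (ne_of_gt (hb i))]
    ring
  -- conclude via injectivity of log on positives
  refine Real.log_injOn_pos (Set.mem_Ioi.mpr (hGpos bb hbbpos))
    (Set.mem_Ioi.mpr (hGpos b hb)) ?_
  rw [hlogG bb hbbpos, hlogG b hb]
  simp only [hsplit]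
  have hexp : ∑ k ∈ S, ξ j k * (((∑ i, β k i * Real.log (c i))
        + ∑ i, β k i * Real.log (b i)) + ∑ q, α k q * Real.log (a q))
      = (∑ k ∈ S, ξ j k * ∑ i, β k i * Real.log (c i))
        + ∑ k ∈ S, ξ j k * ((∑ i, β k i * Real.log (b i)) + ∑ q, α k q * Real.log (a q)) := by
    rw [← Finset.sum_add_distrib]
    exact Finset.sum_congr rfl fun k _ => by ring
  rw [hexp]
  linear_combination hkey2
end

section
/- In the setting of the renormalization group for incomplete similarity: let 1 ≤ n < l, let a₁,…,aₘ, b₁,…,b_l, a be positive reals, β ∈ ℝ with β ≠ 0, β₁,…,β_l, α₁,…,αₘ ∈ ℝ, exponent vectors β⁽ʲ⁾ ∈ ℝ^l, α⁽ʲ⁾ ∈ ℝ^m for j ∈ {1,…,l}, Π_j = ∏_i b_i^{β_i⁽ʲ⁾} ∏_k a_k^{α_k⁽ʲ⁾}, Π = a^β ∏_i b_i^{β_i} ∏_k a_k^{α_k}, incomplete-similarity exponents ξ_k ∈ ℝ for k ∈ {n+1,…,l}, and Π' = Π · ∏_{k=n+1}^{l} Π_k^{ξ_k}. Let μ_k⁽ⁱ⁾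 ∈ ℝ (1 ≤ i ≤ n, n+1 ≤ k ≤ l) be given, and for each j ∈ {n+1,…,l} define μ_j = -(1/β)·[ Σ_{i=1}^{n} β_i μ_j⁽ⁱ⁾ + Σ_{i=1}^{n} (Σ_{k=n+1}^{l} ξ_k β_i⁽ᵏ⁾) μ_j⁽ⁱ⁾ + β_j + Σ_{k=n+1}^{l} ξ_k β_j⁽ᵏ⁾ ]. Then for all positive B_{n+1},…,B_l, under the transformation a_k* = a_k, b_i* = (∏_{k=n+1}^{l} B_k^{μ_k⁽ⁱ⁾}) b_i for i ≤ n, b_k* = B_k b_k for k > n, and a* = (∏_{k=n+1}^{l} B_k^{μ_k}) a, the transformed quantity Π'* (defined by the same formulas from the starred parameters) satisfies Π'* = Π'. -/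
open Finset

private lemma logP {ι : Type*} (s : Finset ι) (f e : ι → ℝ) (hf : ∀ i ∈ s, 0 < f i) :
    Real.log (∏ i ∈ s, f i ^ e i) = ∑ i ∈ s, e i * Real.log (f i) := by
  rw [Real.log_prod fun i hi => (Real.rpow_pos_of_pos (hf i hi) _).ne']
  exact Finset.sum_congr rfl fun i hi => Real.log_rpow (hf i hi) _

private lemma swap1 {ι ι' : Type*} (s : Finset ι) (t : Finset ι')
    (g : ι → ℝ) (f : ι → ι' → ℝ) (c : ι' → ℝ) :
    ∑ x ∈ s, g x * ∑ y ∈ t, f x y * c y = ∑ y ∈ t, (∑ x ∈ s, g x * f x y) * c y := by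
  simp only [Finset.mul_sum, Finset.sum_mul]
  rw [Finset.sum_comm]
  exact Finset.sum_congr rfl fun y _ => Finset.sum_congr rfl fun x _ => by ring

/-- Invariance of the renormalized quantity of interest
`Π' = Π · Π_{k=n+1}^{l} Π_k^{ξ_k}` under the renormalization group of
incomplete similarity in the MDDP construction.  Here
`Π = a^β · Π_i b_i^{β_i} · Π_k a_k^{α_k}` (with `aq = a`, `βv i = β_i`,
`αv k = α_k`), `Π_k` has exponents `βM k i = β_i⁽ᵏ⁾`, `αM k q = α_q⁽ᵏ⁾`,
`ξ k = ξ_k`, and `μ k i = μ_k⁽ⁱ⁾`.  With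
`μ_j = -(1/β)[Σ_{i<n} β_i μ_j⁽ⁱ⁾ + Σ_{i<n}(Σ_{k≥n} ξ_k β_i⁽ᵏ⁾) μ_j⁽ⁱ⁾
  + β_j + Σ_{k≥n} ξ_k β_j⁽ᵏ⁾]`, the transformation `a_k* = a_k`,
`b_i* = (Π_{k≥n} B_k^{μ_k⁽ⁱ⁾}) b_i` for `i < n`, `b_k* = B_k b_k` for
`k ≥ n`, and `a* = (Π_{k≥n} B_k^{μ_k}) a` leaves `Π'` unchanged. -/
theorem stmt_6 (m n l : ℕ) (hn : 1 ≤ n) (hnl : n < l)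
    (a : Fin m → ℝ) (b : Fin l → ℝ) (aq : ℝ)
    (ha : ∀ k, 0 < a k) (hb : ∀ i, 0 < b i) (haq : 0 < aq)
    (β : ℝ) (hβ : β ≠ 0) (βv : Fin l → ℝ) (αv : Fin m → ℝ)
    (βM : Fin l → Fin l → ℝ) (αM : Fin l → Fin m → ℝ)
    (ξ : Fin l → ℝ) (μ : Fin l → Fin l → ℝ)
    (B : Fin l → ℝ) (hB : ∀ k, 0 < B k) :
    let hi := Finset.univ.filter (fun k : Fin l => n ≤ (k : ℕ))
    let lo := Finset.univ.filter (fun i : Fin l => (i : ℕ) < n)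
    let μv : Fin l → ℝ := fun j =>
      -(1 / β) * ((∑ i ∈ lo, βv i * μ j i) +
        (∑ i ∈ lo, (∑ k ∈ hi, ξ k * βM k i) * μ j i) +
        βv j + ∑ k ∈ hi, ξ k * βM k j)
    let bstar : Fin l → ℝ := fun i =>
      if (i : ℕ) < n then (∏ k ∈ hi, B k ^ μ k i) * b i else B i * b i
    let astar : ℝ := (∏ k ∈ hi, B k ^ μv k) * aq
    (astar ^ β * (∏ i, bstar i ^ βv i) * ∏ k, a k ^ αv k) *
        ∏ k ∈ hi, ((∏ i, bstar i ^ βM k i) * ∏ q, a q ^ αM k q) ^ ξ k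
      = (aq ^ β * (∏ i, b i ^ βv i) * ∏ k, a k ^ αv k) *
        ∏ k ∈ hi, ((∏ i, b i ^ βM k i) * ∏ q, a q ^ αM k q) ^ ξ k := by
  intro hi lo μv bstar astar
  -- basic positivity
  have hbs : ∀ i, 0 < bstar i := by
    intro i
    show 0 < if (i : ℕ) < n then (∏ k ∈ hi, B k ^ μ k i) * b i else B i * b i
    by_cases h : (i : ℕ) < n
    · rw [if_pos h]
      exact mul_pos (Finset.prod_pos fun k _ => Real.rpow_pos_of_pos (hB k) _) (hb i)
    · rw [if_neg h]
      exact mul_pos (hB i) (hb i)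
  have has : 0 < astar :=
    mul_pos (Finset.prod_pos fun k _ => Real.rpow_pos_of_pos (hB k) _) haq
  -- abbreviations
  set Lg : Fin l → ℝ := fun k => Real.log (B k) with hLg
  set D : Fin l → ℝ := fun i =>
    if (i : ℕ) < n then ∑ k ∈ hi, μ k i * Lg k else Lg i with hD
  -- log of starred quantities
  have hlogb : ∀ i, Real.log (bstar i) = D i + Real.log (b i) := by
    intro i
    by_cases h : (i : ℕ) < n
    · have hh : bstar i = (∏ k ∈ hi, B k ^ μ k i) * b i := if_pos h
      rw [hh, Real.log_mul (Finset.prod_pos fun k _ =>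
          Real.rpow_pos_of_pos (hB k) _).ne' (hb i).ne',
        logP _ _ _ fun k _ => hB k]
      simp [hD, h, hLg]
    · have hh : bstar i = B i * b i := if_neg h
      rw [hh, Real.log_mul (hB i).ne' (hb i).ne']
      simp [hD, h, hLg]
  have hloga : Real.log astar = (∑ k ∈ hi, μv k * Lg k) + Real.log aq := by
    show Real.log ((∏ k ∈ hi, B k ^ μv k) * aq) = _
    rw [Real.log_mul (Finset.prod_pos fun k _ =>
        Real.rpow_pos_of_pos (hB k) _).ne' haq.ne',
      logP _ _ _ fun k _ => hB k]
  -- positivity of the two sides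
  have h2 : 0 < ∏ i, bstar i ^ βv i :=
    Finset.prod_pos fun i _ => Real.rpow_pos_of_pos (hbs i) _
  have h2' : 0 < ∏ i, b i ^ βv i :=
    Finset.prod_pos fun i _ => Real.rpow_pos_of_pos (hb i) _
  have h3 : 0 < ∏ k, a k ^ αv k :=
    Finset.prod_pos fun k _ => Real.rpow_pos_of_pos (ha k) _
  have hX : ∀ k, 0 < (∏ i, bstar i ^ βM k i) * ∏ q, a q ^ αM k q := fun k =>
    mul_pos (Finset.prod_pos fun i _ => Real.rpow_pos_of_pos (hbs i) _)
      (Finset.prod_pos fun q _ => Real.rpow_pos_of_pos (ha q) _)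
  have hX' : ∀ k, 0 < (∏ i, b i ^ βM k i) * ∏ q, a q ^ αM k q := fun k =>
    mul_pos (Finset.prod_pos fun i _ => Real.rpow_pos_of_pos (hb i) _)
      (Finset.prod_pos fun q _ => Real.rpow_pos_of_pos (ha q) _)
  have h4 : 0 < ∏ k ∈ hi, ((∏ i, bstar i ^ βM k i) * ∏ q, a q ^ αM k q) ^ ξ k :=
    Finset.prod_pos fun k _ => Real.rpow_pos_of_pos (hX k) _
  have h4' : 0 < ∏ k ∈ hi, ((∏ i, b i ^ βM k i) * ∏ q, a q ^ αM k q) ^ ξ k :=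
    Finset.prod_pos fun k _ => Real.rpow_pos_of_pos (hX' k) _
  have hL : 0 < (astar ^ β * (∏ i, bstar i ^ βv i) * ∏ k, a k ^ αv k) *
      ∏ k ∈ hi, ((∏ i, bstar i ^ βM k i) * ∏ q, a q ^ αM k q) ^ ξ k :=
    mul_pos (mul_pos (mul_pos (Real.rpow_pos_of_pos has β) h2) h3) h4
  have hR : 0 < (aq ^ β * (∏ i, b i ^ βv i) * ∏ k, a k ^ αv k) *
      ∏ k ∈ hi, ((∏ i, b i ^ βM k i) * ∏ q, a q ^ αM k q) ^ ξ k :=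
    mul_pos (mul_pos (mul_pos (Real.rpow_pos_of_pos haq β) h2') h3) h4'
  -- splitting of sums over all indices
  have hsplit : ∀ f : Fin l → ℝ, ∑ i, f i = (∑ i ∈ lo, f i) + ∑ i ∈ hi, f i := by
    intro f
    have h := Finset.sum_filter_add_sum_filter_not Finset.univ
      (fun i : Fin l => (i : ℕ) < n) f
    have hh : Finset.univ.filter (fun i : Fin l => ¬ (i : ℕ) < n) = hi := by
      show _ = Finset.univ.filter (fun k : Fin l => n ≤ (k : ℕ))
      simp [not_lt]
    rw [hh] at h
    exact h.symm
  have hDlo : ∀ i ∈ lo, D i = ∑ k ∈ hi, μ k i * Lg k := by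
    intro i hiLo
    have h : (i : ℕ) < n := by simpa [lo] using hiLo
    simp [hD, h]
  have hDhi : ∀ i ∈ hi, D i = Lg i := by
    intro i hiHi
    have h : n ≤ (i : ℕ) := by simpa [hi] using hiHi
    simp [hD, not_lt.2 h]
  -- the key linear identity
  have e1 : ∑ i, βv i * D i
      = (∑ k ∈ hi, (∑ i ∈ lo, βv i * μ k i) * Lg k) + ∑ i ∈ hi, βv i * Lg i := by
    rw [hsplit (fun i => βv i * D i)]
    congr 1
    · have h1 : ∑ i ∈ lo, βv i * D i = ∑ i ∈ lo, βv i * ∑ k ∈ hi, μ k i * Lg k :=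
        Finset.sum_congr rfl fun i h => by rw [hDlo i h]
      rw [h1]
      exact swap1 lo hi βv (fun i k => μ k i) Lg
    · exact Finset.sum_congr rfl fun i h => by rw [hDhi i h]
  have e2 : ∀ k' : Fin l, ∑ i, βM k' i * D i
      = (∑ k ∈ hi, (∑ i ∈ lo, βM k' i * μ k i) * Lg k) + ∑ i ∈ hi, βM k' i * Lg i := by
    intro k'
    rw [hsplit (fun i => βM k' i * D i)]
    congr 1
    · have h1 : ∑ i ∈ lo, βM k' i * D i = ∑ i ∈ lo, βM k' i * ∑ k ∈ hi, μ k i * Lg k :=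
        Finset.sum_congr rfl fun i h => by rw [hDlo i h]
      rw [h1]
      exact swap1 lo hi (βM k') (fun i k => μ k i) Lg
    · exact Finset.sum_congr rfl fun i h => by rw [hDhi i h]
  have e3 : ∑ k' ∈ hi, ξ k' * ∑ i, βM k' i * D i
      = (∑ k ∈ hi, (∑ k' ∈ hi, ξ k' * ∑ i ∈ lo, βM k' i * μ k i) * Lg k)
        + ∑ k ∈ hi, (∑ k' ∈ hi, ξ k' * βM k' k) * Lg k := by
    have h1 : ∑ k' ∈ hi, ξ k' * ∑ i, βM k' i * D i
        = ∑ k' ∈ hi, ξ k' * ((∑ k ∈ hi, (∑ i ∈ lo, βM k' i * μ k i) * Lg k)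
          + ∑ i ∈ hi, βM k' i * Lg i) :=
      Finset.sum_congr rfl fun k' _ => by rw [e2 k']
    rw [h1]
    simp only [mul_add, Finset.sum_add_distrib]
    congr 1
    · exact swap1 hi hi ξ (fun k' k => ∑ i ∈ lo, βM k' i * μ k i) Lg
    · exact swap1 hi hi ξ βM Lg
  have Z : β * (∑ k ∈ hi, μv k * Lg k) + (∑ i, βv i * D i)
      + (∑ k ∈ hi, ξ k * ∑ i, βM k i * D i) = 0 := by
    rw [e1, e3, Finset.mul_sum]
    rw [← Finset.sum_add_distrib, ← Finset.sum_add_distrib, ← Finset.sum_add_distrib,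
      ← Finset.sum_add_distrib]
    apply Finset.sum_eq_zero
    intro k _
    have hμ : μv k = -(1 / β) * ((∑ i ∈ lo, βv i * μ k i) +
        (∑ k' ∈ hi, ξ k' * ∑ i ∈ lo, βM k' i * μ k i) +
        βv k + ∑ k' ∈ hi, ξ k' * βM k' k) := by
      show -(1 / β) * _ = _
      rw [swap1 hi lo ξ βM (fun i => μ k i)]
    rw [hμ]
    field_simp
    ring
  -- pass to logarithms
  have key : Real.log ((astar ^ β * (∏ i, bstar i ^ βv i) * ∏ k, a k ^ αv k) *
        ∏ k ∈ hi, ((∏ i, bstar i ^ βM k i) * ∏ q, a q ^ αM k q) ^ ξ k)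
      = Real.log ((aq ^ β * (∏ i, b i ^ βv i) * ∏ k, a k ^ αv k) *
        ∏ k ∈ hi, ((∏ i, b i ^ βM k i) * ∏ q, a q ^ αM k q) ^ ξ k) := by
    rw [Real.log_mul (mul_pos (mul_pos (Real.rpow_pos_of_pos has β) h2) h3).ne' h4.ne',
      Real.log_mul (mul_pos (Real.rpow_pos_of_pos has β) h2).ne' h3.ne',
      Real.log_mul (Real.rpow_pos_of_pos has β).ne' h2.ne',
      Real.log_mul (mul_pos (mul_pos (Real.rpow_pos_of_pos haq β) h2') h3).ne' h4'.ne',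
      Real.log_mul (mul_pos (Real.rpow_pos_of_pos haq β) h2').ne' h3.ne',
      Real.log_mul (Real.rpow_pos_of_pos haq β).ne' h2'.ne',
      Real.log_rpow has, Real.log_rpow haq,
      logP _ _ _ (fun i _ => hbs i), logP _ _ _ (fun i _ => hb i),
      logP _ _ _ (fun k _ => hX k), logP _ _ _ (fun k _ => hX' k)]
    have e4 : ∑ k ∈ hi, ξ k * Real.log ((∏ i, bstar i ^ βM k i) * ∏ q, a q ^ αM k q)
        = ∑ k ∈ hi, ξ k * ((∑ i, βM k i * (D i + Real.log (b i)))
            + ∑ q, αM k q * Real.log (a q)) := by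
      refine Finset.sum_congr rfl fun k _ => ?_
      rw [Real.log_mul (Finset.prod_pos fun i _ =>
          Real.rpow_pos_of_pos (hbs i) _).ne'
        (Finset.prod_pos fun q _ => Real.rpow_pos_of_pos (ha q) _).ne',
        logP _ _ _ (fun i _ => hbs i), logP _ _ _ (fun q _ => ha q)]
      congr 2
      exact Finset.sum_congr rfl fun i _ => by rw [hlogb i]
    have e5 : ∑ k ∈ hi, ξ k * Real.log ((∏ i, b i ^ βM k i) * ∏ q, a q ^ αM k q)
        = ∑ k ∈ hi, ξ k * ((∑ i, βM k i * Real.log (b i))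
            + ∑ q, αM k q * Real.log (a q)) := by
      refine Finset.sum_congr rfl fun k _ => ?_
      rw [Real.log_mul (Finset.prod_pos fun i _ =>
          Real.rpow_pos_of_pos (hb i) _).ne'
        (Finset.prod_pos fun q _ => Real.rpow_pos_of_pos (ha q) _).ne',
        logP _ _ _ (fun i _ => hb i), logP _ _ _ (fun q _ => ha q)]
    have e6 : ∑ i, βv i * Real.log (bstar i)
        = ∑ i, βv i * (D i + Real.log (b i)) :=
      Finset.sum_congr rfl fun i _ => by rw [hlogb i]
    rw [e4, e5, e6, hloga]
    simp only [mul_add, Finset.sum_add_distrib]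
    linarith [Z]
  exact Real.log_injOn_pos (Set.mem_Ioi.2 hL) (Set.mem_Ioi.2 hR) key
end

section
/- Let m, l be positive integers, Λ an invertible m×m real matrix, and Γ an m×l real matrix. For every invertible l×l real matrix B, the matrix Δ = Γᵀ(Λ⁻¹)ᵀ is the unique l×m matrix satisfying B Δ = A(B), where A(B) is the l×m matrix whose j-th row is (Λ⁻¹Γβ⁽ʲ⁾)ᵀ and β⁽ʲ⁾ denotes the j-th row of B. In particular, the solution Δ of the similarity-group matrix equation is the same for every choice of invertible construction matrix B, i.e. Buckingham's similarity group is independent of the choice of dimensionless construction. -/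
open Matrix

/-- For every invertible construction matrix `B`, the matrix
`Δ = Γᵀ(Λ⁻¹)ᵀ` is the unique solution of `BΔ = A(B)`, where `A(B)` is the
`l × m` matrix whose `j`-th row is `(Λ⁻¹Γβ⁽ʲ⁾)ᵀ` and `β⁽ʲ⁾` is the `j`-th
row of `B`.  In particular Buckingham's similarity group is independent of
the choice of dimensionless construction. -/
theorem stmt_8 (m l : ℕ) (hm : 0 < m) (hl : 0 < l)
    (Λ : Matrix (Fin m) (Fin m) ℝ) (hΛ : IsUnit Λ.det)
    (Γ : Matrix (Fin m) (Fin l) ℝ) :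
    ∀ B : Matrix (Fin l) (Fin l) ℝ, IsUnit B.det →
      ∀ Δ : Matrix (Fin l) (Fin m) ℝ,
        B * Δ =
            (Matrix.of fun (j : Fin l) (k : Fin m) =>
              Λ⁻¹.mulVec (Γ.mulVec (B j)) k) ↔
          Δ = Γᵀ * (Λ⁻¹)ᵀ := by
  intro B hB Δ
  have hA : (Matrix.of fun (j : Fin l) (k : Fin m) =>
      Λ⁻¹.mulVec (Γ.mulVec (B j)) k) = B * (Γᵀ * (Λ⁻¹)ᵀ) := by
    ext j k
    simp only [Matrix.of_apply, Matrix.mulVec, Matrix.mul_apply,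
      Matrix.transpose_apply, dotProduct]
    simp only [Finset.mul_sum]
    rw [Finset.sum_comm]
    apply Finset.sum_congr rfl; intro t _
    apply Finset.sum_congr rfl; intro i _
    ring
  rw [hA]
  constructor
  · intro h
    calc Δ = B⁻¹ * (B * Δ) := by rw [← Matrix.mul_assoc, Matrix.nonsing_inv_mul B hB, Matrix.one_mul]
    _ = B⁻¹ * (B * (Γᵀ * (Λ⁻¹)ᵀ)) := by rw [h]
    _ = Γᵀ * (Λ⁻¹)ᵀ := by rw [← Matrix.mul_assoc, Matrix.nonsing_inv_mul B hB, Matrix.one_mul]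
  · intro h; rw [h]
end

section
/- Let n, K, ρ, R be positive real numbers, let τ₀, τ_w be real with 0 ≤ τ₀ < τ_w, set φ = τ₀/τ_w, Ū(τ₀, τ_w) = nR·(τ_w/K)^{1/n}·J(φ, n) with J(φ, n) = (1-φ)^{(n+1)/n}·[ (1-φ)²/(3n+1) + 2φ(1-φ)/(2n+1) + φ²/(n+1) ] > 0, and f(τ₀, τ_w) = 2τ_w/(ρ·Ū(τ₀, τ_w)²). Then for every positive real B₁: f(B₁τ₀, B₁τ_w) = B₁^{(n-2)/n}·f(τ₀, τ_w). -/
/-- Renormalization group for the friction factor of laminar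
Herschel-Bulkley pipe flow in friction coordinates: with
`Ū(τ₀, τ_w) = nR (τ_w/K)^{1/n} J(τ₀/τ_w, n)` and
`f(τ₀, τ_w) = 2τ_w/(ρ Ū(τ₀, τ_w)²)`, scaling `τ₀` and `τ_w` by `B₁ > 0`
scales the friction factor by `B₁^{(n-2)/n}`. -/
theorem stmt_17 (n K ρ R : ℝ) (hn : 0 < n) (hK : 0 < K) (hρ : 0 < ρ)
    (hR : 0 < R) (τ₀ τw : ℝ) (hτ₀ : 0 ≤ τ₀) (hlt : τ₀ < τw) :
    let J : ℝ → ℝ := fun φ => (1 - φ) ^ ((n + 1) / n) *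
      ((1 - φ) ^ 2 / (3 * n + 1) + 2 * φ * (1 - φ) / (2 * n + 1) +
        φ ^ 2 / (n + 1))
    let Ubar : ℝ → ℝ → ℝ := fun t0 tw =>
      n * R * (tw / K) ^ (1 / n) * J (t0 / tw)
    let f : ℝ → ℝ → ℝ := fun t0 tw => 2 * tw / (ρ * Ubar t0 tw ^ 2)
    0 < J (τ₀ / τw) →
    ∀ B₁ : ℝ, 0 < B₁ →
      f (B₁ * τ₀) (B₁ * τw) = B₁ ^ ((n - 2) / n) * f τ₀ τw := by
  intro J Ubar f hJ B₁ hB₁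
  have hτw : 0 < τw := lt_of_le_of_lt hτ₀ hlt
  have hratio : B₁ * τ₀ / (B₁ * τw) = τ₀ / τw := by
    field_simp
  have hpow : (B₁ * τw / K) ^ (1 / n) = B₁ ^ (1 / n) * (τw / K) ^ (1 / n) := by
    rw [mul_div_assoc, Real.mul_rpow hB₁.le (by positivity)]
  have hUbar : Ubar (B₁ * τ₀) (B₁ * τw) = B₁ ^ (1 / n) * Ubar τ₀ τw := by
    simp only [Ubar, hratio, hpow]; ring
  have hU : 0 < Ubar τ₀ τw := by
    have : 0 < (τw / K) ^ (1 / n) := Real.rpow_pos_of_pos (by positivity) _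
    exact mul_pos (mul_pos (mul_pos hn hR) this) hJ
  have hBn : (B₁ ^ (1 / n)) ^ 2 = B₁ ^ (2 / n) := by
    rw [← Real.rpow_natCast (B₁ ^ (1 / n)) 2, ← Real.rpow_mul hB₁.le]
    norm_num
    congr 1; ring
  have hexp : B₁ ^ ((n - 2) / n) = B₁ / B₁ ^ (2 / n) := by
    rw [eq_div_iff (by positivity), ← Real.rpow_add hB₁]
    rw [← add_div, sub_add_cancel, div_self hn.ne', Real.rpow_one]
  simp only [f, hUbar, mul_pow, hBn, hexp]
  have h2 : (0:ℝ) < B₁ ^ (2 / n) := Real.rpow_pos_of_pos hB₁ _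
  field_simp
end
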